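/- Let W be a finite antipodal set in ℝ^k, i.e., for every pair of distinct points x, y ∈ W there exists a nonzero linear functional f : ℝ^k → ℝ with f(x) < f(y) and f(x) ≤ f(w) ≤ f(y) for all w ∈ W. Then W has at most 2^k elements. -/

import Mathlib

open MeasureTheory Set Module Pointwise ENNReal NNReal

/-- The level set of a nonzero linear functional is a null set. -/
lemma antipodal_levelset_null {k : ℕ} (f : EuclideanSpace ℝ (Fin k) →ₗ[ℝ] ℝ)
    (hf : f ≠ 0) (c : ℝ) : volume (f ⁻¹' {c}) = 0 := by
  obtain ⟨u, hu⟩ : ∃ u, f u ≠ 0 := by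
    by_contra h
    push_neg at h
    exact hf (LinearMap.ext fun x => by simp [h x])
  set v := (c / f u) • u with hv_def
  have hv : f v = c := by
    simp only [hv_def, LinearMap.map_smul, smul_eq_mul]
    field_simp
  have hset : f ⁻¹' {c} = v +ᵥ (LinearMap.ker f : Set (EuclideanSpace ℝ (Fin k))) := by
    ext z
    simp only [Set.mem_preimage, Set.mem_singleton_iff, Set.mem_vadd_set, SetLike.mem_coe,
      LinearMap.mem_ker]
    constructor
    · intro hz
      exact ⟨z - v, by simp [map_sub, hz, hv], by simp [vadd_eq_add]⟩
    · rintro ⟨a, ha, rfl⟩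
      simp [vadd_eq_add, map_add, ha, hv]
  rw [hset, measure_vadd]
  exact Measure.addHaar_submodule _ _ (by simpa [LinearMap.ker_eq_top] using hf)

theorem antipodal_aux : ∀ (k : ℕ) (W : Finset (EuclideanSpace ℝ (Fin k))),
    (∀ x ∈ W, ∀ y ∈ W, x ≠ y →
      ∃ f : EuclideanSpace ℝ (Fin k) →ₗ[ℝ] ℝ, f ≠ 0 ∧ f x < f y ∧
        ∀ w ∈ W, f x ≤ f w ∧ f w ≤ f y) → W.card ≤ 2 ^ k := by
  intro k
  induction k using Nat.strong_induction_on with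
  | _ k ih =>
  intro W hW
  classical
  rcases W.eq_empty_or_nonempty with rfl | ⟨w₀, hw₀⟩
  · simp
  by_cases hspan : affineSpan ℝ (W : Set (EuclideanSpace ℝ (Fin k))) = ⊤
  · -- nondegenerate case: volume argument
    set K : Set (EuclideanSpace ℝ (Fin k)) := convexHull ℝ (W : Set (EuclideanSpace ℝ (Fin k))) with hK_def
    have hKconv : Convex ℝ K := convex_convexHull ℝ _
    have hKcp : IsCompact K := W.finite_toSet.isCompact_convexHull ℝ
    have hint : (interior K).Nonempty :=
      interior_convexHull_nonempty_iff_affineSpan_eq_top.2 hspan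
    have hpos : 0 < volume K :=
      lt_of_lt_of_le (isOpen_interior.measure_pos volume hint) (measure_mono interior_subset)
    have hfin : volume K ≠ ⊤ := hKcp.measure_lt_top.ne
    set T : EuclideanSpace ℝ (Fin k) → Set (EuclideanSpace ℝ (Fin k)) := fun w => (2 : ℝ)⁻¹ • (w +ᵥ K) with hT_def
    have hTsub : ∀ w ∈ W, T w ⊆ K := by
      intro w hw z hz
      simp only [hT_def, Set.mem_smul_set, Set.mem_vadd_set] at hz
      obtain ⟨u, ⟨a, ha, rfl⟩, rfl⟩ := hz
      have hwK : w ∈ K := subset_convexHull ℝ _ hw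
      have heq : (2 : ℝ)⁻¹ • (w +ᵥ a) = (2 : ℝ)⁻¹ • w + (2 : ℝ)⁻¹ • a := by
        simp [vadd_eq_add, smul_add]
      rw [heq]
      exact hKconv hwK ha (by norm_num) (by norm_num) (by norm_num)
    have hTmeas : ∀ w ∈ W, MeasurableSet (T w) := by
      intro w _
      have : IsCompact (T w) := by
        have h1 : IsCompact (w +ᵥ K) := by
          rw [show w +ᵥ K = (w + ·) '' K from rfl]
          exact hKcp.image (continuous_add_left w)
        rw [show T w = ((2 : ℝ)⁻¹ • ·) '' (w +ᵥ K) from rfl]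
        exact h1.image (continuous_const_smul _)
      exact this.measurableSet
    have hTdisj : (W : Set (EuclideanSpace ℝ (Fin k))).Pairwise (Function.onFun (AEDisjoint volume) T) := by
      intro x hx y hy hxy
      obtain ⟨f, hf0, hflt, hfb⟩ := hW x hx y hy hxy
      have hKb : K ⊆ f ⁻¹' Set.Icc (f x) (f y) := by
        apply convexHull_min
        · intro w hw
          exact hfb w hw
        · exact (convex_Icc _ _).linear_preimage f
      have hsub : T x ∩ T y ⊆ f ⁻¹' {(2 : ℝ)⁻¹ * (f x + f y)} := by
        rintro z ⟨hzx, hzy⟩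
        simp only [hT_def, Set.mem_smul_set, Set.mem_vadd_set] at hzx hzy
        obtain ⟨u, ⟨a, ha, rfl⟩, rfl⟩ := hzx
        obtain ⟨u', ⟨b, hb, rfl⟩, hz'⟩ := hzy
        have hfa := hKb ha
        have hfb' := hKb hb
        simp only [Set.mem_preimage, Set.mem_Icc] at hfa hfb'
        have heq : f ((2 : ℝ)⁻¹ • (y +ᵥ b)) = f ((2 : ℝ)⁻¹ • (x +ᵥ a)) := by rw [hz']
        simp only [vadd_eq_add, _root_.map_smul, map_add, smul_eq_mul,
          Set.mem_preimage, Set.mem_singleton_iff] at heq ⊢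
        linarith [hfa.1, hfa.2, hfb'.1, hfb'.2, heq]
      exact measure_mono_null hsub (antipodal_levelset_null f hf0 _)
    have hsum : ∑ w ∈ W, volume (T w) = volume (⋃ w ∈ W, T w) :=
      (measure_biUnion_finset₀ hTdisj fun w hw => (hTmeas w hw).nullMeasurableSet).symm
    have hTvol : ∀ w, volume (T w) = ENNReal.ofReal ((2 : ℝ)⁻¹ ^ k) * volume K := by
      intro w
      rw [hT_def]
      simp only
      rw [Measure.addHaar_smul, measure_vadd]
      congr 2
      rw [abs_of_nonneg (by positivity)]
      congr 1
      exact finrank_euclideanSpace_fin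
    have hub : (W.card : ℝ≥0∞) * (ENNReal.ofReal ((2 : ℝ)⁻¹ ^ k) * volume K) ≤ volume K := by
      calc (W.card : ℝ≥0∞) * (ENNReal.ofReal ((2 : ℝ)⁻¹ ^ k) * volume K)
          = ∑ w ∈ W, volume (T w) := by rw [Finset.sum_congr rfl (fun w _ => hTvol w)]; simp [mul_comm]
        _ = volume (⋃ w ∈ W, T w) := hsum
        _ ≤ volume K := measure_mono (Set.iUnion₂_subset hTsub)
    have hofReal : ENNReal.ofReal ((2 : ℝ)⁻¹ ^ k) = ((2 : ℝ≥0∞) ^ k)⁻¹ := by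
      rw [ENNReal.ofReal_pow (by norm_num)]
      have h2 : ENNReal.ofReal (2 : ℝ)⁻¹ = (2 : ℝ≥0∞)⁻¹ := by
        rw [ENNReal.ofReal_inv_of_pos (by norm_num)]
        norm_num
      rw [h2, ENNReal.inv_pow]
    rw [hofReal, ← mul_assoc] at hub
    have h2top : ((2 : ℝ≥0∞) ^ k) ≠ ⊤ := ENNReal.pow_ne_top (by norm_num)
    have h2zero : ((2 : ℝ≥0∞) ^ k) ≠ 0 := pow_ne_zero _ (by norm_num)
    have hcard : (W.card : ℝ≥0∞) * ((2 : ℝ≥0∞) ^ k)⁻¹ ≤ 1 := by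
      rw [← ENNReal.mul_le_mul_iff_left hpos.ne' hfin, one_mul]
      exact hub
    have hfinal : (W.card : ℝ≥0∞) ≤ 2 ^ k := by
      calc (W.card : ℝ≥0∞) = (W.card : ℝ≥0∞) * ((2 : ℝ≥0∞) ^ k)⁻¹ * (2 : ℝ≥0∞) ^ k := by
            rw [mul_assoc, ENNReal.inv_mul_cancel h2zero h2top, mul_one]
        _ ≤ 1 * (2 : ℝ≥0∞) ^ k := mul_le_mul_left hcard _
        _ = 2 ^ k := one_mul _
    exact_mod_cast hfinal
  · -- degenerate case: reduce dimension
    set V : Submodule ℝ (EuclideanSpace ℝ (Fin k)) := vectorSpan ℝ (W : Set (EuclideanSpace ℝ (Fin k))) with hV_def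
    have hVne : V ≠ ⊤ := by
      intro h
      exact hspan ((AffineSubspace.affineSpan_eq_top_iff_vectorSpan_eq_top_of_nonempty ℝ (EuclideanSpace ℝ (Fin k)) (EuclideanSpace ℝ (Fin k))
        ⟨w₀, hw₀⟩).2 h)
    set d := finrank ℝ V with hd_def
    have hdk : d < k := by
      have h1 : finrank ℝ V < finrank ℝ (EuclideanSpace ℝ (Fin k)) := Submodule.finrank_lt hVne
      rwa [finrank_euclideanSpace_fin] at h1
    obtain ⟨e⟩ : Nonempty (V ≃ₗ[ℝ] EuclideanSpace ℝ (Fin d)) :=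
      FiniteDimensional.nonempty_linearEquiv_of_finrank_eq (by rw [finrank_euclideanSpace_fin])
    have hmem : ∀ x ∈ W, x - w₀ ∈ V := by
      intro x hx
      simpa [vsub_eq_sub] using vsub_mem_vectorSpan ℝ hx hw₀
    set g : EuclideanSpace ℝ (Fin k) → EuclideanSpace ℝ (Fin d) :=
      fun x => if h : x - w₀ ∈ V then e ⟨x - w₀, h⟩ else 0 with hg_def
    have hg : ∀ x (hx : x ∈ W), g x = e ⟨x - w₀, hmem x hx⟩ := by
      intro x hx
      simp [hg_def, dif_pos (hmem x hx)]
    have hginj : Set.InjOn g (W : Set (EuclideanSpace ℝ (Fin k))) := by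
      intro x hx y hy hxy
      rw [hg x hx, hg y hy] at hxy
      have := e.injective hxy
      have := Subtype.ext_iff.1 this
      simpa [sub_left_inj] using this
    set W' := W.image g with hW'_def
    have hcard : W'.card = W.card := Finset.card_image_of_injOn hginj
    have hW' : ∀ x' ∈ W', ∀ y' ∈ W', x' ≠ y' →
        ∃ f' : EuclideanSpace ℝ (Fin d) →ₗ[ℝ] ℝ, f' ≠ 0 ∧ f' x' < f' y' ∧
          ∀ w' ∈ W', f' x' ≤ f' w' ∧ f' w' ≤ f' y' := by
      intro x' hx' y' hy' hne
      obtain ⟨x, hx, rfl⟩ := Finset.mem_image.1 hx'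
      obtain ⟨y, hy, rfl⟩ := Finset.mem_image.1 hy'
      have hxy : x ≠ y := fun h => hne (by rw [h])
      obtain ⟨f, hf0, hflt, hfb⟩ := hW x hx y hy hxy
      refine ⟨f ∘ₗ V.subtype ∘ₗ (e.symm : EuclideanSpace ℝ (Fin d) →ₗ[ℝ] V), ?_, ?_, ?_⟩
      · intro h0
        have hx0 : (f ∘ₗ V.subtype ∘ₗ (e.symm : EuclideanSpace ℝ (Fin d) →ₗ[ℝ] V)) (g x)
            = f x - f w₀ := by
          rw [hg x hx]
          simp [map_sub]
        have hy0 : (f ∘ₗ V.subtype ∘ₗ (e.symm : EuclideanSpace ℝ (Fin d) →ₗ[ℝ] V)) (g y)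
            = f y - f w₀ := by
          rw [hg y hy]
          simp [map_sub]
        rw [h0] at hx0 hy0
        simp only [LinearMap.zero_apply] at hx0 hy0
        linarith
      · rw [hg x hx, hg y hy]
        simp only [LinearMap.coe_comp, Function.comp_apply, LinearEquiv.coe_coe,
          LinearEquiv.symm_apply_apply, Submodule.coe_subtype]
        simp [map_sub]
        linarith
      · intro w' hw'
        obtain ⟨w, hw, rfl⟩ := Finset.mem_image.1 hw'
        rw [hg x hx, hg y hy, hg w hw]
        simp only [LinearMap.coe_comp, Function.comp_apply, LinearEquiv.coe_coe,
          LinearEquiv.symm_apply_apply, Submodule.coe_subtype]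
        simp only [map_sub]
        obtain ⟨h1, h2⟩ := hfb w hw
        constructor <;> linarith
    calc W.card = W'.card := hcard.symm
      _ ≤ 2 ^ d := ih d hdk W' hW'
      _ ≤ 2 ^ k := Nat.pow_le_pow_right (by norm_num) hdk.le

/-- A finite antipodal set in `ℝ^k` has at most `2 ^ k` elements. -/
theorem antipodal_card_le_two_pow (k : ℕ) (W : Finset (EuclideanSpace ℝ (Fin k)))
    (hW : ∀ x ∈ W, ∀ y ∈ W, x ≠ y →
      ∃ f : EuclideanSpace ℝ (Fin k) →ₗ[ℝ] ℝ, f ≠ 0 ∧ f x < f y ∧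
        ∀ w ∈ W, f x ≤ f w ∧ f w ≤ f y) :
    W.card ≤ 2 ^ k := by
  exact antipodal_aux k W hW
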